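/- arXiv:1811.01203 — 2 statements merged into one kernel-verified Lean document; each statement's English description precedes it below -/
import Mathlib

section
/- Let c ∈ (0,3] and let f be analytic on the unit disk with f(0)=0, f'(0)=1, f'(z) ≠ 0, and Re(1 + zf''(z)/f'(z)) > 1 − c/2 for all z in the unit disk. Then the first logarithmic coefficient satisfies |γ_1| ≤ c/4, with equality for the function f_c with 1 + zf_c''(z)/f_c'(z) = 1 + cz/(1−z). -/
open Complex Metric Real

noncomputable section

/-- `γ` is the sequence of logarithmic coefficients of `f` on the unit disk:
`log (f z / z) = 2 * ∑ γ n z^n`, where the branch of log is the analytic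
function `g` with `g 0 = 0` and `exp (g z) = f z / z`. -/
def IsLogCoeff (f : ℂ → ℂ) (γ : ℕ → ℂ) : Prop :=
  ∃ g : ℂ → ℂ, AnalyticOnNhd ℂ g (Metric.ball 0 1) ∧ g 0 = 0 ∧
    (∀ z ∈ Metric.ball (0:ℂ) 1, z ≠ 0 → Complex.exp (g z) = f z / z) ∧
    (∀ z ∈ Metric.ball (0:ℂ) 1, HasSum (fun n : ℕ => 2 * γ (n + 1) * z ^ (n + 1)) (g z))

/-- `g` is subordinate to `h` on the unit disk. -/
def Subordinate (g h : ℂ → ℂ) : Prop :=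
  ∃ φ : ℂ → ℂ, AnalyticOnNhd ℂ φ (Metric.ball 0 1) ∧ φ 0 = 0 ∧
    (∀ z ∈ Metric.ball (0:ℂ) 1, φ z ∈ Metric.ball (0:ℂ) 1) ∧
    ∀ z ∈ Metric.ball (0:ℂ) 1, g z = h (φ z)


lemma deriv_from_hasSum (g : ℂ → ℂ) (γ : ℕ → ℂ)
    (hsum : ∀ z ∈ Metric.ball (0:ℂ) 1, HasSum (fun n : ℕ => 2 * γ (n + 1) * z ^ (n + 1)) (g z)) :
    deriv g 0 = 2 * γ 1 := by
  set a : ℕ → ℂ := fun n => if n = 0 then 0 else 2 * γ n with ha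
  set p := FormalMultilinearSeries.ofScalars ℂ a with hp
  have hsum' : ∀ z ∈ Metric.ball (0:ℂ) 1, HasSum (fun n => a n * z ^ n) (g z) := by
    intro z hz
    have h1 : HasSum (fun n : ℕ => a (n + 1) * z ^ (n + 1)) (g z) := by
      have := hsum z hz
      simpa [ha] using this
    have := (hasSum_nat_add_iff (f := fun n => a n * z ^ n) 1).mp h1
    simpa [ha] using this
  have hrad : (1/2 : NNReal) ≤ p.radius := by
    apply FormalMultilinearSeries.le_radius_of_isBigO
    have hs : Summable (fun n : ℕ => a n * (1/2 : ℂ) ^ n) :=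
      (hsum' (1/2 : ℂ) (by
        rw [Metric.mem_ball, dist_zero_right]
        have : ‖(1/2 : ℂ)‖ = 1/2 := by norm_num
        rw [this]; norm_num)).summable
    have ht := hs.tendsto_atTop_zero
    have ht2 : Filter.Tendsto (fun n : ℕ => ‖p n‖ * ((1/2 : NNReal) : ℝ) ^ n)
        Filter.atTop (nhds 0) := by
      have : ∀ n : ℕ, ‖p n‖ * ((1/2 : NNReal) : ℝ) ^ n = ‖a n * (1/2 : ℂ) ^ n‖ := by
        intro n
        rw [hp, FormalMultilinearSeries.ofScalars_norm, norm_mul, norm_pow]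
        norm_num
      simp_rw [this]
      simpa using ht.norm
    exact ht2.isBigO_one ℝ
  have hball : HasFPowerSeriesOnBall g p 0 ((1/2 : NNReal) : ENNReal) := by
    refine ⟨by exact_mod_cast hrad, by norm_num, ?_⟩
    intro y hy
    have hy1 : y ∈ Metric.ball (0:ℂ) 1 := by
      rw [EMetric.mem_ball, edist_zero_right] at hy
      rw [Metric.mem_ball, dist_zero_right]
      have := hy.trans_le (le_refl _)
      have h2 : ‖y‖₊ < (1/2 : NNReal) := by exact_mod_cast hy
      have : ‖y‖ < 1/2 := h2
      linarith
    have := hsum' y hy1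
    simp only [zero_add]
    convert this using 1
    · rfl
    ext n
    rw [hp, FormalMultilinearSeries.ofScalars_apply_eq]
    simp [smul_eq_mul]
  have := hball.hasFPowerSeriesAt.deriv
  rw [this, hp, FormalMultilinearSeries.ofScalars_apply_eq]
  simp [ha]

lemma second_deriv_eq (f : ℂ → ℂ) (γ : ℕ → ℂ)
    (hf : AnalyticOnNhd ℂ f (Metric.ball 0 1)) (hf0 : f 0 = 0)
    (hγ : IsLogCoeff f γ) : deriv (deriv f) 0 = 4 * γ 1 := by
  obtain ⟨g, hg, hg0, hgexp, hgsum⟩ := hγ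
  have hdg : deriv g 0 = 2 * γ 1 := deriv_from_hasSum g γ hgsum
  have hmem : (0:ℂ) ∈ Metric.ball (0:ℂ) 1 := by simp
  have hball : Metric.ball (0:ℂ) 1 ∈ nhds (0:ℂ) := (Metric.isOpen_ball).mem_nhds hmem
  set E : ℂ → ℂ := fun z => z * Complex.exp (g z) with hE
  have hfE : ∀ z ∈ Metric.ball (0:ℂ) 1, f z = E z := by
    intro z hz
    by_cases h : z = 0
    · simp [h, hf0, hE]
    · have h2 := hgexp z hz h
      rw [eq_div_iff h] at h2
      rw [hE, ← h2]; ring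
  have hfeq : f =ᶠ[nhds (0:ℂ)] E := Filter.eventuallyEq_of_mem hball hfE
  set D : ℂ → ℂ := fun z => Complex.exp (g z) + z * (Complex.exp (g z) * deriv g z) with hD
  have hDE : ∀ z ∈ Metric.ball (0:ℂ) 1, HasDerivAt E (D z) z := by
    intro z hz
    have hgd : HasDerivAt g (deriv g z) z := ((hg z hz).differentiableAt).hasDerivAt
    have hexp : HasDerivAt (fun w => Complex.exp (g w)) (Complex.exp (g z) * deriv g z) z :=
      (Complex.hasDerivAt_exp (g z)).comp z hgd
    have := (hasDerivAt_id z).fun_mul hexp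
    simpa [hE, hD, mul_comm, mul_assoc, mul_left_comm] using this
  have hderivE : ∀ z ∈ Metric.ball (0:ℂ) 1, deriv E z = D z := fun z hz => (hDE z hz).deriv
  have h3 : deriv f =ᶠ[nhds (0:ℂ)] D :=
    hfeq.deriv.trans (Filter.eventuallyEq_of_mem hball hderivE)
  rw [h3.deriv_eq]
  -- compute deriv D 0
  have hga : AnalyticAt ℂ g 0 := hg 0 hmem
  have hgd0 : HasDerivAt g (deriv g 0) 0 := hga.differentiableAt.hasDerivAt
  have hexp0 : HasDerivAt (fun w => Complex.exp (g w)) (Complex.exp (g 0) * deriv g 0) 0 :=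
    (Complex.hasDerivAt_exp (g 0)).comp 0 hgd0
  have hwa : DifferentiableAt ℂ (fun z => Complex.exp (g z) * deriv g z) 0 := by
    have h1 : AnalyticAt ℂ (deriv g) 0 := hg.deriv 0 hmem
    exact (hexp0.differentiableAt).mul h1.differentiableAt
  have hterm2 : HasDerivAt (fun z => z * (Complex.exp (g z) * deriv g z))
      (1 * (Complex.exp (g 0) * deriv g 0) +
        0 * deriv (fun z => Complex.exp (g z) * deriv g z) 0) 0 :=
    (hasDerivAt_id 0).mul hwa.hasDerivAt
  have hDd : HasDerivAt D (Complex.exp (g 0) * deriv g 0 +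
      (1 * (Complex.exp (g 0) * deriv g 0) +
        0 * deriv (fun z => Complex.exp (g z) * deriv g z) 0)) 0 := hexp0.add hterm2
  rw [hDd.deriv, hg0, hdg]
  simp; ring

lemma hasDerivAt_p (f : ℂ → ℂ) (hf : AnalyticOnNhd ℂ f (Metric.ball 0 1))
    (hf1 : deriv f 0 = 1) :
    HasDerivAt (fun z => z * deriv (deriv f) z / deriv f z) (deriv (deriv f) 0) 0 := by
  have hmem : (0:ℂ) ∈ Metric.ball (0:ℂ) 1 := by simp
  have hh : DifferentiableAt ℂ (fun z => deriv (deriv f) z / deriv f z) 0 :=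
    ((hf.deriv.deriv 0 hmem).differentiableAt).div
      ((hf.deriv 0 hmem).differentiableAt) (by rw [hf1]; exact one_ne_zero)
  have := (hasDerivAt_id 0).fun_mul hh.hasDerivAt
  simp only [one_mul, zero_mul, add_zero, id] at this
  have h0 : deriv (deriv f) 0 / deriv f 0 = deriv (deriv f) 0 := by rw [hf1, div_one]
  rw [h0] at this
  convert this using 2 with z
  · rfl
  · rfl
  rw [mul_div_assoc]

lemma schwarz_half (c : ℝ) (hc : 0 < c) (p : ℂ → ℂ)
    (hp : DifferentiableOn ℂ p (Metric.ball 0 1)) (hp0 : p 0 = 0)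
    (hre : ∀ z ∈ Metric.ball (0:ℂ) 1, -c/2 < (p z).re) (d : ℂ)
    (hd : HasDerivAt p d 0) : ‖d‖ ≤ c := by
  set q : ℂ → ℂ := fun z => p z / (p z + c) with hq
  have hne : ∀ z ∈ Metric.ball (0:ℂ) 1, p z + c ≠ 0 := by
    intro z hz h
    have := hre z hz
    have h2 : (p z + c).re = (p z).re + c := by simp
    rw [h] at h2
    simp at h2
    linarith
  have hqd : DifferentiableOn ℂ q (Metric.ball 0 1) := by
    apply hp.div (hp.add (differentiableOn_const _)) hne
  have hmaps : Set.MapsTo q (Metric.ball 0 1) (Metric.ball (q 0) 1) := by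
    intro z hz
    have h0 : q 0 = 0 := by simp [hq, hp0]
    rw [h0, Metric.mem_ball, dist_zero_right]
    have hpos : (0:ℝ) < ‖p z + (c:ℂ)‖ := norm_pos_iff.mpr (hne z hz)
    rw [hq]
    simp only
    rw [norm_div, div_lt_one hpos]
    have key : Complex.normSq (p z) < Complex.normSq (p z + c) := by
      have := hre z hz
      simp only [Complex.normSq_apply, Complex.add_re, Complex.add_im,
        Complex.ofReal_re, Complex.ofReal_im, add_zero]
      nlinarith [sq_nonneg ((p z).im)]
    have h1 : ‖p z‖ < ‖p z + c‖ := by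
      rw [Complex.norm_def, Complex.norm_def]
      exact Real.sqrt_lt_sqrt (Complex.normSq_nonneg _) key
    simpa using h1
  have hmem : (0:ℂ) ∈ Metric.ball (0:ℂ) 1 := by simp
  have hsch := Complex.norm_deriv_le_div_of_mapsTo_ball hqd (hmaps.mono_right Metric.ball_subset_closedBall) one_pos
  have hcne : (↑c : ℂ) ≠ 0 := by exact_mod_cast hc.ne'
  have hqd0 : HasDerivAt q (d / c) 0 := by
    have h1 : HasDerivAt (fun z => p z + (c:ℂ)) d 0 := hd.add_const _
    have h2 := hd.div h1 (by rw [hp0, zero_add]; exact hcne)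
    have : (d * (p 0 + ↑c) - p 0 * d) / (p 0 + ↑c) ^ 2 = d / c := by
      rw [hp0]; simp only [zero_add, zero_mul, sub_zero]; field_simp
    rwa [this] at h2
  rw [hqd0.deriv] at hsch
  rw [norm_div] at hsch
  have hac : ‖(c:ℂ)‖ = c := by
    rw [Complex.norm_real, Real.norm_eq_abs, abs_of_pos hc]
  rw [hac] at hsch
  norm_num at hsch
  rw [div_le_one hc] at hsch; linarith [hsch]
theorem stmt10 (c : ℝ) (hc0 : 0 < c) (hc3 : c ≤ 3)
    (f : ℂ → ℂ) (γ : ℕ → ℂ)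
    (hf : AnalyticOnNhd ℂ f (Metric.ball 0 1)) (hf0 : f 0 = 0)
    (hf1 : deriv f 0 = 1)
    (hf' : ∀ z ∈ Metric.ball (0:ℂ) 1, deriv f z ≠ 0)
    (hF : ∀ z ∈ Metric.ball (0:ℂ) 1,
      (1 + z * deriv (deriv f) z / deriv f z).re > 1 - c/2)
    (hγ : IsLogCoeff f γ) :
    ‖γ 1‖ ≤ c / 4 ∧
      ∀ fc : ℂ → ℂ, ∀ γc : ℕ → ℂ,
        AnalyticOnNhd ℂ fc (Metric.ball 0 1) → fc 0 = 0 → deriv fc 0 = 1 →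
        (∀ z ∈ Metric.ball (0:ℂ) 1, deriv fc z ≠ 0) →
        (∀ z ∈ Metric.ball (0:ℂ) 1,
          1 + z * deriv (deriv fc) z / deriv fc z = 1 + (c : ℂ) * z / (1 - z)) →
        IsLogCoeff fc γc → ‖γc 1‖ = c / 4 := by
  constructor
  · set p : ℂ → ℂ := fun z => z * deriv (deriv f) z / deriv f z with hp
    have hpa : AnalyticOnNhd ℂ p (Metric.ball 0 1) := by
      apply AnalyticOnNhd.div
      · exact analyticOnNhd_id.mul hf.deriv.deriv
      · exact hf.deriv
      · exact hf'
    have hp0 : p 0 = 0 := by simp [hp]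
    have hre : ∀ z ∈ Metric.ball (0:ℂ) 1, -c/2 < (p z).re := by
      intro z hz
      have := hF z hz
      have h2 : (1 + z * deriv (deriv f) z / deriv f z).re
          = 1 + (p z).re := by simp [hp]
      rw [h2] at this
      linarith
    have hd := hasDerivAt_p f hf hf1
    have hsch := schwarz_half c hc0 p hpa.differentiableOn hp0 hre _ hd
    have h2 := second_deriv_eq f γ hf hf0 hγ
    rw [h2] at hsch
    have h3 : ‖4 * γ 1‖ = 4 * ‖γ 1‖ := by
      rw [norm_mul]; norm_num
    rw [h3] at hsch
    linarith
  · intro fc γc hfc hfc0 hfc1 hfc' hFc hγc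
    have h2 := second_deriv_eq fc γc hfc hfc0 hγc
    have hd := hasDerivAt_p fc hfc hfc1
    set M : ℂ → ℂ := fun z => (c:ℂ) * z / (1 - z) with hM
    have heq : ∀ z ∈ Metric.ball (0:ℂ) 1,
        (fun z => z * deriv (deriv fc) z / deriv fc z) z = M z := by
      intro z hz
      have := hFc z hz
      exact add_left_cancel this
    have hmem : (0:ℂ) ∈ Metric.ball (0:ℂ) 1 := by simp
    have hball : Metric.ball (0:ℂ) 1 ∈ nhds (0:ℂ) := Metric.isOpen_ball.mem_nhds hmem
    have hfeq : (fun z => z * deriv (deriv fc) z / deriv fc z) =ᶠ[nhds (0:ℂ)] M :=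
      Filter.eventuallyEq_of_mem hball heq
    have hMd : HasDerivAt M (c:ℂ) 0 := by
      have hu : HasDerivAt (fun z : ℂ => (c:ℂ) * z) (c:ℂ) 0 := by
        simpa using (hasDerivAt_id (0:ℂ)).const_mul (c:ℂ)
      have hv : HasDerivAt (fun z : ℂ => 1 - z) (-1 : ℂ) 0 := by
        simpa using (hasDerivAt_id (0:ℂ)).const_sub (1:ℂ)
      have := hu.fun_div hv (by norm_num)
      simpa using this
    have hderiv : deriv (deriv fc) 0 = (c:ℂ) := by
      rw [← hd.deriv, hfeq.deriv_eq, hMd.deriv]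
    rw [hderiv] at h2
    have hγ1 : γc 1 = (c:ℂ) / 4 := by
      linear_combination (-(1:ℂ)/4) * h2
    rw [hγ1]
    rw [norm_div, Complex.norm_real, Real.norm_eq_abs, abs_of_pos hc0]
    norm_num
end
end

section
/- Let c ∈ (0,3] and let f be analytic on the unit disk with f(0)=0, f'(0)=1, f'(z) ≠ 0, and Re(1 + zf''(z)/f'(z)) > 1 − c/2 for all z in the unit disk. Then the second logarithmic coefficient satisfies |γ_2| ≤ (4c + c²)/48. -/
open Complex Metric Real Filter
open scoped ENNReal NNReal

noncomputable section

lemma aux_mobius (a z : ℂ) (ha : ‖a‖ ≤ 1) (hz : ‖z‖ ≤ 1) :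
    ‖z - a‖ ≤ ‖1 - (starRingEnd ℂ) a * z‖ := by
  have key : Complex.normSq (1 - (starRingEnd ℂ) a * z) - Complex.normSq (z - a)
      = (1 - Complex.normSq a) * (1 - Complex.normSq z) := by
    simp only [Complex.normSq_apply, Complex.sub_re, Complex.sub_im, Complex.mul_re,
      Complex.mul_im, Complex.one_re, Complex.one_im, Complex.conj_re, Complex.conj_im]
    ring
  have ha' : ‖a‖ ≤ 1 := by simpa using ha
  have hz' : ‖z‖ ≤ 1 := by simpa using hz
  have ha2 : Complex.normSq a ≤ 1 := by
    rw [← Complex.sq_norm]; nlinarith [norm_nonneg a]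
  have hz2 : Complex.normSq z ≤ 1 := by
    rw [← Complex.sq_norm]; nlinarith [norm_nonneg z]
  have hle : Complex.normSq (z - a) ≤ Complex.normSq (1 - (starRingEnd ℂ) a * z) := by
    nlinarith [key]
  have := Real.sqrt_le_sqrt hle
  simpa [Complex.norm_def] using this

lemma aux_schwarz_closed {ψ : ℂ → ℂ} (hd : DifferentiableOn ℂ ψ (ball 0 1)) (h0 : ψ 0 = 0)
    (hb : ∀ z ∈ ball (0:ℂ) 1, ‖ψ z‖ ≤ 1) : ‖deriv ψ 0‖ ≤ 1 := by
  have key : ∀ ε : ℝ, 0 < ε → ‖deriv ψ 0‖ ≤ 1 + ε := by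
    intro ε hε
    have hmaps : Set.MapsTo ψ (ball 0 1) (ball (ψ 0) (1 + ε)) := by
      intro z hz
      rw [h0, mem_ball_zero_iff]
      exact lt_of_le_of_lt (hb z hz) (by linarith)
    have := Complex.norm_deriv_le_div_of_mapsTo_ball hd (hmaps.mono_right ball_subset_closedBall) one_pos
    simpa using this
  linarith [le_of_forall_pos_le_add (fun ε hε => key ε hε)]

lemma aux_sp {φ : ℂ → ℂ} (hd : DifferentiableOn ℂ φ (ball 0 1))
    (hb : ∀ z ∈ ball (0:ℂ) 1, ‖φ z‖ ≤ 1) : ‖deriv φ 0‖ ≤ 1 - ‖φ 0‖ ^ 2 := by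
  have h0mem : (0:ℂ) ∈ ball (0:ℂ) 1 := mem_ball_self one_pos
  set a := φ 0 with ha_def
  have ha : ‖a‖ ≤ 1 := hb 0 h0mem
  rcases eq_or_lt_of_le ha with heq | hlt
  · -- boundary case: φ is constant by max modulus
    have hmax : IsMaxOn (norm ∘ φ) (ball 0 1) 0 := by
      intro z hz
      simpa [← heq] using hb z hz
    have hconst := Complex.eqOn_of_isPreconnected_of_isMaxOn_norm
      (convex_ball (0:ℂ) 1).isPreconnected isOpen_ball hd h0mem hmax
    have heqf : φ =ᶠ[nhds (0:ℂ)] fun _ => φ 0 := by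
      filter_upwards [isOpen_ball.mem_nhds h0mem] with y hy using hconst hy
    rw [heqf.deriv_eq, deriv_const]
    have : ‖φ 0‖ = 1 := by rw [← ha_def, heq]
    simp [this, heq]
  · -- interior case
    set ca := (starRingEnd ℂ) a with hca_def
    have hnormca : ‖ca‖ = ‖a‖ := by simp [hca_def]
    have hden : ∀ z ∈ ball (0:ℂ) 1, (1 : ℂ) - ca * φ z ≠ 0 := by
      intro z hz hcontra
      have h1 : (1:ℂ) = ca * φ z := by linear_combination hcontra
      have : (1:ℝ) ≤ ‖a‖ := by
        calc (1:ℝ) = ‖ca * φ z‖ := by rw [← h1]; simp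
        _ = ‖a‖ * ‖φ z‖ := by rw [norm_mul, hnormca]
        _ ≤ ‖a‖ * 1 := mul_le_mul_of_nonneg_left (hb z hz) (norm_nonneg a)
        _ = ‖a‖ := mul_one _
      linarith
    set ψ : ℂ → ℂ := fun z => (φ z - a) / (1 - ca * φ z) with hψ_def
    have hψd : DifferentiableOn ℂ ψ (ball 0 1) := by
      apply DifferentiableOn.div
      · exact hd.sub_const a
      · exact (differentiableOn_const 1).sub ((differentiableOn_const ca).mul hd)
      · exact hden
    have hψ0 : ψ 0 = 0 := by simp [hψ_def, ← ha_def]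
    have hψb : ∀ z ∈ ball (0:ℂ) 1, ‖ψ z‖ ≤ 1 := by
      intro z hz
      have hdpos : 0 < ‖(1:ℂ) - ca * φ z‖ := norm_pos_iff.mpr (hden z hz)
      rw [hψ_def]
      simp only [norm_div]
      rw [div_le_one hdpos]
      exact aux_mobius a (φ z) ha (hb z hz)
    have hψderiv : ‖deriv ψ 0‖ ≤ 1 := aux_schwarz_closed hψd hψ0 hψb
    -- compute deriv ψ 0
    have hφat : DifferentiableAt ℂ φ 0 := hd.differentiableAt (isOpen_ball.mem_nhds h0mem)
    have hD : HasDerivAt φ (deriv φ 0) 0 := hφat.hasDerivAt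
    have hu : HasDerivAt (fun z => φ z - a) (deriv φ 0) 0 := hD.sub_const a
    have hv : HasDerivAt (fun z => (1:ℂ) - ca * φ z) (-(ca * deriv φ 0)) 0 := by
      simpa using (hD.const_mul ca).const_sub 1
    have hv0 : (1:ℂ) - ca * φ 0 ≠ 0 := hden 0 h0mem
    have hψD : HasDerivAt ψ ((deriv φ 0 * (1 - ca * φ 0) -
        (φ 0 - a) * -(ca * deriv φ 0)) / (1 - ca * φ 0) ^ 2) 0 := hu.div hv hv0
    have hβ : (1:ℂ) - ca * φ 0 = ((1 - ‖a‖ ^ 2 : ℝ) : ℂ) := by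
      rw [← ha_def, hca_def]
      rw [show (starRingEnd ℂ) a * a = a * (starRingEnd ℂ) a from mul_comm _ _, Complex.mul_conj]
      push_cast [Complex.normSq_eq_norm_sq]
      ring
    have hβ0 : ((1 - ‖a‖ ^ 2 : ℝ) : ℂ) ≠ 0 := by rw [← hβ]; exact hv0
    have hψD' : deriv ψ 0 = deriv φ 0 / ((1 - ‖a‖ ^ 2 : ℝ) : ℂ) := by
      rw [hψD.deriv, show φ 0 - a = 0 from sub_self (φ 0), hβ]
      rw [zero_mul, sub_zero]
      rw [div_eq_div_iff (pow_ne_zero 2 hβ0) hβ0]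
      ring
    rw [hψD', norm_div] at hψderiv
    have hβnorm : ‖((1 - ‖a‖ ^ 2 : ℝ) : ℂ)‖ = 1 - ‖a‖ ^ 2 := by
      rw [Complex.norm_real, Real.norm_eq_abs,
        _root_.abs_of_nonneg (by nlinarith [norm_nonneg a] : (0:ℝ) ≤ 1 - ‖a‖ ^ 2)]
    rw [hβnorm] at hψderiv
    have hpos : 0 < 1 - ‖a‖ ^ 2 := by nlinarith [norm_nonneg a]
    rw [div_le_one hpos] at hψderiv
    simpa using hψderiv

lemma aux_coeff {g : ℂ → ℂ} {γ : ℕ → ℂ}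
    (hgs : ∀ z ∈ Metric.ball (0:ℂ) 1, HasSum (fun n : ℕ => 2 * γ (n + 1) * z ^ (n + 1)) (g z)) :
    deriv (deriv g) 0 = 4 * γ 2 := by
  classical
  set b : ℕ → ℂ := fun n => if n = 0 then 0 else 2 * γ n with hb_def
  set P : FormalMultilinearSeries ℂ ℂ ℂ := FormalMultilinearSeries.ofScalars ℂ b with hP_def
  -- HasSum of the series at every point of ball 0 1
  have hsum : ∀ y ∈ Metric.ball (0:ℂ) 1, HasSum (fun n => b n • y ^ n) (g y) := by
    intro y hy
    rw [← hasSum_nat_add_iff' 1]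
    have : HasSum (fun n : ℕ => 2 * γ (n + 1) * y ^ (n + 1)) (g y) := hgs y hy
    simpa [hb_def, smul_eq_mul] using this
  -- radius bound
  have hz₀mem : ((1/2 : ℝ) : ℂ) ∈ Metric.ball (0:ℂ) 1 := by
    rw [mem_ball_zero_iff, Complex.norm_real, Real.norm_eq_abs]
    rw [_root_.abs_of_nonneg (by norm_num : (0:ℝ) ≤ 1/2)]; norm_num
  have htend : Tendsto (fun n : ℕ => ‖b (n+1) • ((1/2 : ℝ) : ℂ) ^ (n+1)‖) atTop (nhds 0) := by
    have hS := (hsum _ hz₀mem).summable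
    have := hS.tendsto_atTop_zero
    have h2 : Tendsto (fun n : ℕ => b (n+1) • ((1/2 : ℝ) : ℂ) ^ (n+1)) atTop (nhds 0) :=
      this.comp (tendsto_add_atTop_nat 1)
    simpa using h2.norm
  have hrad : (1/2 : ℝ≥0∞) ≤ P.radius := by
    have hev : ∀ᶠ n : ℕ in atTop, ‖b (n+1) • ((1/2 : ℝ) : ℂ) ^ (n+1)‖ ≤ 1 :=
      htend.eventually_le_const (by norm_num)
    obtain ⟨N, hN⟩ := eventually_atTop.mp hev
    have key : ((1/2 : ℝ≥0) : ℝ≥0∞) ≤ P.radius := by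
      apply P.le_radius_of_eventually_le 1
      rw [eventually_atTop]
      refine ⟨N + 1, fun n hn => ?_⟩
      obtain ⟨m, rfl⟩ : ∃ m, n = m + 1 := ⟨n - 1, by omega⟩
      have hPn : ‖P (m+1)‖ = ‖b (m+1)‖ := by
        rw [hP_def]; exact FormalMultilinearSeries.ofScalars_norm ℂ b (m+1)
      rw [hPn]
      have := hN m (by omega)
      rw [norm_smul, norm_pow, Complex.norm_real, Real.norm_eq_abs,
        _root_.abs_of_nonneg (by norm_num : (0:ℝ) ≤ 1/2)] at this
      calc ‖b (m+1)‖ * ((1/2 : ℝ≥0) : ℝ) ^ (m+1)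
          = ‖b (m+1)‖ * (1/2 : ℝ) ^ (m+1) := by norm_num
        _ ≤ 1 := this
    convert key using 1
    simp [ENNReal.coe_div]
  -- build HasFPowerSeriesOnBall
  have hfp : HasFPowerSeriesOnBall g P 0 (1/2) := by
    refine ⟨hrad, by norm_num, ?_⟩
    intro y hy
    have hy1 : y ∈ Metric.ball (0:ℂ) 1 := by
      have hmem : y ∈ Metric.eball (0:ℂ) 1 := Metric.eball_subset_eball (by norm_num) hy
      rwa [show (1:ℝ≥0∞) = ENNReal.ofReal 1 by simp, Metric.emetric_ball] at hmem
    have := hsum y hy1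
    have heq : (fun n => P n fun _ => y) = fun n => b n • y ^ n := by
      funext n
      exact FormalMultilinearSeries.ofScalars_apply_eq b y n
    rw [heq, zero_add]
    exact this
  -- extract second derivative
  have hfact := hfp.factorial_smul (1:ℂ) 2
  have hlhs : (Nat.factorial 2) • P 2 (fun _ => (1:ℂ)) = 4 * γ 2 := by
    rw [FormalMultilinearSeries.ofScalars_apply_eq]
    simp [hb_def, Nat.factorial]
    ring
  have hrhs : iteratedFDeriv ℂ 2 g 0 (fun _ => (1:ℂ)) = deriv (deriv g) 0 := by
    rw [← iteratedDeriv_eq_iteratedFDeriv]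
    rw [show (2:ℕ) = 1 + 1 from rfl, iteratedDeriv_succ', iteratedDeriv_succ',
      iteratedDeriv_zero]
  rw [hlhs, hrhs] at hfact
  exact hfact.symm

lemma aux_key (c : ℝ) (hc0 : 0 < c) (g : ℂ → ℂ) (hg : AnalyticOnNhd ℂ g (Metric.ball 0 1))
    (hden : ∀ z ∈ Metric.ball (0:ℂ) 1, 1 + z * deriv g z ≠ 0)
    (hre : ∀ z ∈ Metric.ball (0:ℂ) 1,
      -c/2 < (z * ((2 * deriv g z + z * (deriv g z)^2 + z * deriv (deriv g) z) /
        (1 + z * deriv g z))).re) :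
    ‖deriv (deriv g) 0‖ ≤ (4*c + c^2)/12 := by
  have h0mem : (0:ℂ) ∈ ball (0:ℂ) 1 := mem_ball_self one_pos
  have hcC : ((c:ℂ)) ≠ 0 := by exact_mod_cast hc0.ne'
  have hg1a : AnalyticOnNhd ℂ (deriv g) (ball 0 1) := hg.deriv
  have hg2a : AnalyticOnNhd ℂ (deriv (deriv g)) (ball 0 1) := hg1a.deriv
  have hg1d : DifferentiableOn ℂ (deriv g) (ball 0 1) := hg1a.differentiableOn
  have hg2d : DifferentiableOn ℂ (deriv (deriv g)) (ball 0 1) := hg2a.differentiableOn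
  set num : ℂ → ℂ := fun z => 2 * deriv g z + z * (deriv g z)^2 + z * deriv (deriv g) z
    with hnum_def
  set den : ℂ → ℂ := fun z => 1 + z * deriv g z with hden_def
  set q : ℂ → ℂ := fun z => num z / den z with hq_def
  set hh : ℂ → ℂ := fun z => z * q z with hhh_def
  set φ : ℂ → ℂ := fun z => q z / (hh z + (c:ℂ)) with hφ_def
  set w : ℂ → ℂ := fun z => z * φ z with hw_def
  have hden' : ∀ z ∈ ball (0:ℂ) 1, den z ≠ 0 := hden
  have hre' : ∀ z ∈ ball (0:ℂ) 1, -c/2 < (hh z).re := hre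
  -- differentiability
  have hnumd : DifferentiableOn ℂ num (ball 0 1) :=
    ((hg1d.const_mul 2).add (differentiableOn_id.mul (hg1d.pow 2))).add
      (differentiableOn_id.mul hg2d)
  have hdend : DifferentiableOn ℂ den (ball 0 1) :=
    (differentiableOn_const 1).add (differentiableOn_id.mul hg1d)
  have hqd : DifferentiableOn ℂ q (ball 0 1) := hnumd.div hdend hden'
  have hhhd : DifferentiableOn ℂ hh (ball 0 1) := differentiableOn_id.mul hqd
  have hhc : ∀ z ∈ ball (0:ℂ) 1, hh z + (c:ℂ) ≠ 0 := by
    intro z hz heq0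
    have h1 : (hh z + (c:ℂ)).re = (hh z).re + c := by
      simp [Complex.add_re, Complex.ofReal_re]
    have h2 := hre' z hz
    rw [heq0] at h1
    simp at h1
    linarith
  have hφd : DifferentiableOn ℂ φ (ball 0 1) :=
    hqd.div (hhhd.add (differentiableOn_const _)) hhc
  have hwd : DifferentiableOn ℂ w (ball 0 1) := differentiableOn_id.mul hφd
  have hw0 : w 0 = 0 := by simp [hw_def]
  -- |w| < 1 on the ball
  have hwlt : ∀ z ∈ ball (0:ℂ) 1, ‖w z‖ < 1 := by
    intro z hz
    have hkey : Complex.normSq (hh z) < Complex.normSq (hh z + (c:ℂ)) := by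
      have h1 : Complex.normSq (hh z + (c:ℂ)) - Complex.normSq (hh z)
          = 2*c*(hh z).re + c^2 := by
        simp only [Complex.normSq_apply, Complex.add_re, Complex.add_im, Complex.ofReal_re,
          Complex.ofReal_im]
        ring
      nlinarith [hre' z hz]
    have habs : ‖hh z‖ < ‖hh z + (c:ℂ)‖ := by
      rw [Complex.norm_def, Complex.norm_def]
      exact Real.sqrt_lt_sqrt (Complex.normSq_nonneg _) hkey
    have habs' : ‖hh z‖ < ‖hh z + (c:ℂ)‖ := by
      simpa using habs
    have hpos : 0 < ‖hh z + (c:ℂ)‖ := lt_of_le_of_lt (norm_nonneg (hh z)) habs'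
    have hwz : w z = hh z / (hh z + (c:ℂ)) := by
      simp only [hw_def, hφ_def, hhh_def]
      ring
    rw [hwz, norm_div, div_lt_one hpos]
    exact habs'
  have h_maps : Set.MapsTo w (ball (0:ℂ) 1) (ball (w 0) 1) := by
    intro z hz
    rw [hw0]
    exact mem_ball_zero_iff.mpr (hwlt z hz)
  -- Schwarz estimates for w
  have hwgrow : ∀ z ∈ ball (0:ℂ) 1, ‖w z‖ ≤ ‖z‖ := by
    intro z hz
    have := Complex.dist_le_div_mul_dist_of_mapsTo_ball hwd (h_maps.mono_right ball_subset_closedBall) hz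
    simpa [hw0, dist_eq_norm] using this
  have hφ0at : DifferentiableAt ℂ φ 0 := hφd.differentiableAt (isOpen_ball.mem_nhds h0mem)
  have hwD : HasDerivAt w (1 * φ 0 + 0 * deriv φ 0) 0 := (hasDerivAt_id 0).mul hφ0at.hasDerivAt
  have hw'0 : deriv w 0 = φ 0 := by
    have := hwD.deriv
    simpa using this
  have hφb : ∀ z ∈ ball (0:ℂ) 1, ‖φ z‖ ≤ 1 := by
    intro z hz
    rcases eq_or_ne z 0 with rfl | hz0
    · rw [← hw'0]
      have := Complex.norm_deriv_le_div_of_mapsTo_ball hwd (h_maps.mono_right ball_subset_closedBall) one_pos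
      simpa using this
    · have h1 := hwgrow z hz
      have h2 : w z = z * φ z := rfl
      rw [h2, norm_mul] at h1
      have hzpos : 0 < ‖z‖ := norm_pos_iff.mpr hz0
      exact (mul_le_mul_iff_right₀ hzpos).mp (h1.trans_eq (mul_one ‖z‖).symm)
  have hsp : ‖deriv φ 0‖ ≤ 1 - ‖φ 0‖ ^ 2 := aux_sp hφd hφb
  -- values and derivatives at 0
  set u : ℂ := deriv g 0 with hu_def
  set v : ℂ := deriv (deriv g) 0 with hv_def
  have e_num0 : num 0 = 2*u := by simp [hnum_def, hu_def]
  have e_den0 : den 0 = 1 := by simp [hden_def]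
  have e_q0 : q 0 = 2*u := by rw [hq_def]; simp only; rw [e_num0, e_den0, div_one]
  have e_hh0 : hh 0 = 0 := by simp [hhh_def]
  have e_φ0 : φ 0 = 2*u/(c:ℂ) := by
    rw [hφ_def]; simp only; rw [e_q0, e_hh0, zero_add]
  have hg1at : HasDerivAt (deriv g) v 0 := (hg1a 0 h0mem).differentiableAt.hasDerivAt
  have hg2at : HasDerivAt (deriv (deriv g)) (deriv (deriv (deriv g)) 0) 0 :=
    (hg2a 0 h0mem).differentiableAt.hasDerivAt
  have hnum' : HasDerivAt num (3*v + u^2) 0 := by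
    have h := ((hg1at.const_mul 2).add ((hasDerivAt_id 0).mul (hg1at.pow 2))).add
      ((hasDerivAt_id 0).mul hg2at)
    refine h.congr_deriv ?_
    simp [hu_def, hv_def]
    ring
  have hdenD : HasDerivAt den u 0 := by
    have h := (hasDerivAt_const (0:ℂ) (1:ℂ)).add ((hasDerivAt_id 0).mul hg1at)
    refine h.congr_deriv ?_
    simp [hu_def]
  have hq' : HasDerivAt q (3*v - u^2) 0 := by
    have h := hnum'.div hdenD (hden 0 h0mem)
    refine h.congr_deriv ?_
    rw [e_num0, e_den0]
    ring
  have hhh' : HasDerivAt hh (2*u) 0 := by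
    have h := (hasDerivAt_id 0).mul hq'
    refine h.congr_deriv ?_
    simp only [id_eq, e_q0]
    ring
  have hφ' : HasDerivAt φ (((3*v - u^2) * (hh 0 + (c:ℂ)) - q 0 * (2*u)) / (hh 0 + (c:ℂ))^2) 0 :=
    hq'.div (hhh'.add_const (c:ℂ)) (hhc 0 h0mem)
  have hφval : deriv φ 0 = ((3*v - u^2) * (c:ℂ) - 4*u^2) / (c:ℂ)^2 := by
    rw [hφ'.deriv, e_hh0, e_q0, zero_add]
    ring
  -- final algebra
  set t : ℝ := ‖u‖ with ht_def
  have ht0 : 0 ≤ t := norm_nonneg u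
  have hnormc : ‖((c:ℝ) : ℂ)‖ = c := by
    rw [Complex.norm_real, Real.norm_eq_abs, _root_.abs_of_pos hc0]
  have hφ0norm : ‖φ 0‖ = 2*t/c := by
    rw [e_φ0, norm_div, norm_mul, hnormc]
    simp [ht_def]
  have ht1 : 2*t/c ≤ 1 := by rw [← hφ0norm]; exact hφb 0 h0mem
  have htc : t ≤ c/2 := by
    rw [div_le_one hc0] at ht1
    linarith
  have hDb : ‖deriv φ 0‖ ≤ 1 - (2*t/c)^2 := by rw [← hφ0norm]; exact hsp
  have e3 : (3:ℂ)*v = (deriv φ 0) * (c:ℂ) + 4*u^2/(c:ℂ) + u^2 := by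
    rw [hφval]
    field_simp
    ring
  have hnorm3v : 3*‖v‖ ≤ ‖deriv φ 0‖*c + 4*t^2/c + t^2 := by
    have h1 : ‖(3:ℂ)*v‖ = 3*‖v‖ := by
      rw [norm_mul]; norm_num
    have h2 : ‖(deriv φ 0) * (c:ℂ) + 4*u^2/(c:ℂ) + u^2‖
        ≤ ‖deriv φ 0‖*c + 4*t^2/c + t^2 := by
      calc ‖(deriv φ 0) * (c:ℂ) + 4*u^2/(c:ℂ) + u^2‖
          ≤ ‖(deriv φ 0) * (c:ℂ) + 4*u^2/(c:ℂ)‖ + ‖u^2‖ := norm_add_le _ _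
        _ ≤ ‖(deriv φ 0) * (c:ℂ)‖ + ‖4*u^2/(c:ℂ)‖ + ‖u^2‖ := by
            linarith [norm_add_le ((deriv φ 0) * (c:ℂ)) (4*u^2/(c:ℂ))]
        _ = ‖deriv φ 0‖*c + 4*t^2/c + t^2 := by
            have h4 : ‖(4:ℂ)‖ = 4 := by
              simpa using Complex.norm_real 4
            simp only [norm_mul, norm_div, norm_pow, hnormc, h4, ht_def]
    rw [← h1, e3]
    exact h2
  have hDc : ‖deriv φ 0‖*c ≤ (1 - (2*t/c)^2)*c :=
    mul_le_mul_of_nonneg_right hDb hc0.le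
  have hident : (1 - (2*t/c)^2)*c + 4*t^2/c + t^2 = c + t^2 := by
    field_simp
    ring
  have hfinal : 3*‖v‖ ≤ c + t^2 := by
    calc 3*‖v‖ ≤ ‖deriv φ 0‖*c + 4*t^2/c + t^2 := hnorm3v
      _ ≤ (1 - (2*t/c)^2)*c + 4*t^2/c + t^2 := by linarith
      _ = c + t^2 := hident
  nlinarith [htc, ht0]


theorem stmt11 (c : ℝ) (hc0 : 0 < c) (hc3 : c ≤ 3)
    (f : ℂ → ℂ) (γ : ℕ → ℂ)
    (hf : AnalyticOnNhd ℂ f (Metric.ball 0 1)) (hf0 : f 0 = 0)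
    (hf1 : deriv f 0 = 1)
    (hf' : ∀ z ∈ Metric.ball (0:ℂ) 1, deriv f z ≠ 0)
    (hF : ∀ z ∈ Metric.ball (0:ℂ) 1,
      (1 + z * deriv (deriv f) z / deriv f z).re > 1 - c/2)
    (hγ : IsLogCoeff f γ) :
    ‖γ 2‖ ≤ (4 * c + c ^ 2) / 48 := by
  obtain ⟨g, hga, hg0, hge, hgs⟩ := hγ
  -- f z = z * exp (g z) on the ball
  have hfe : ∀ z ∈ Metric.ball (0:ℂ) 1, f z = z * Complex.exp (g z) := by
    intro z hz
    rcases eq_or_ne z 0 with rfl | h0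
    · simp [hf0]
    · rw [hge z hz h0]
      field_simp
  -- first derivative
  have hD1 : ∀ z ∈ Metric.ball (0:ℂ) 1,
      HasDerivAt f (Complex.exp (g z) * (1 + z * deriv g z)) z := by
    intro z hz
    have hgat : HasDerivAt g (deriv g z) z := (hga z hz).differentiableAt.hasDerivAt
    have hE : HasDerivAt (fun y => Complex.exp (g y)) (Complex.exp (g z) * deriv g z) z :=
      hgat.cexp
    have h1 : HasDerivAt (fun y => y * Complex.exp (g y))
        (1 * Complex.exp (g z) + z * (Complex.exp (g z) * deriv g z)) z :=
      (hasDerivAt_id z).mul hE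
    have h2 : f =ᶠ[nhds z] fun y => y * Complex.exp (g y) := by
      filter_upwards [isOpen_ball.mem_nhds hz] with y hy using hfe y hy
    have h3 := h1.congr_of_eventuallyEq h2
    refine h3.congr_deriv ?_
    ring
  have hderivf : ∀ z ∈ Metric.ball (0:ℂ) 1,
      deriv f z = Complex.exp (g z) * (1 + z * deriv g z) := fun z hz => (hD1 z hz).deriv
  -- second derivative
  have hg1a : AnalyticOnNhd ℂ (deriv g) (Metric.ball 0 1) := hga.deriv
  have hderivf2 : ∀ z ∈ Metric.ball (0:ℂ) 1,
      deriv (deriv f) z = Complex.exp (g z) *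
        (2 * deriv g z + z * (deriv g z)^2 + z * deriv (deriv g) z) := by
    intro z hz
    have hgat : HasDerivAt g (deriv g z) z := (hga z hz).differentiableAt.hasDerivAt
    have hg1at : HasDerivAt (deriv g) (deriv (deriv g) z) z :=
      (hg1a z hz).differentiableAt.hasDerivAt
    have hE : HasDerivAt (fun y => Complex.exp (g y)) (Complex.exp (g z) * deriv g z) z :=
      hgat.cexp
    have hden : HasDerivAt (fun y => (1:ℂ) + y * deriv g y)
        (0 + (1 * deriv g z + z * deriv (deriv g) z)) z :=
      (hasDerivAt_const z (1:ℂ)).add ((hasDerivAt_id z).mul hg1at)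
    have h1 : HasDerivAt (fun y => Complex.exp (g y) * (1 + y * deriv g y))
        ((Complex.exp (g z) * deriv g z) * (1 + z * deriv g z) +
          Complex.exp (g z) * (0 + (1 * deriv g z + z * deriv (deriv g) z))) z := hE.mul hden
    have h2 : deriv f =ᶠ[nhds z] fun y => Complex.exp (g y) * (1 + y * deriv g y) := by
      filter_upwards [isOpen_ball.mem_nhds hz] with y hy using hderivf y hy
    have h3 := h1.congr_of_eventuallyEq h2
    rw [h3.deriv]
    ring
  -- denominator nonzero
  have hdenne : ∀ z ∈ Metric.ball (0:ℂ) 1, 1 + z * deriv g z ≠ 0 := by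
    intro z hz hzero
    apply hf' z hz
    rw [hderivf z hz, hzero, mul_zero]
  -- real part condition
  have hre : ∀ z ∈ Metric.ball (0:ℂ) 1,
      -c/2 < (z * ((2 * deriv g z + z * (deriv g z)^2 + z * deriv (deriv g) z) /
        (1 + z * deriv g z))).re := by
    intro z hz
    have h1 := hF z hz
    have h2 : deriv (deriv f) z / deriv f z =
        (2 * deriv g z + z * (deriv g z)^2 + z * deriv (deriv g) z) / (1 + z * deriv g z) := by
      rw [hderivf2 z hz, hderivf z hz,
        mul_div_mul_left _ _ (Complex.exp_ne_zero (g z))]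
    rw [mul_div_assoc] at h1
    rw [h2] at h1
    have h3 : (1 + z * ((2 * deriv g z + z * (deriv g z)^2 + z * deriv (deriv g) z) /
        (1 + z * deriv g z))).re
        = 1 + (z * ((2 * deriv g z + z * (deriv g z)^2 + z * deriv (deriv g) z) /
        (1 + z * deriv g z))).re := by
      rw [Complex.add_re, Complex.one_re]
    rw [← mul_div_assoc] at h1
    rw [mul_div_assoc] at h1
    rw [h3] at h1
    linarith
  have hkey := aux_key c hc0 g hga hdenne hre
  have hco := aux_coeff hgs
  rw [hco] at hkey
  have h4 : ‖(4:ℂ) * γ 2‖ = 4 * ‖γ 2‖ := by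
    rw [norm_mul]
    have : ‖(4:ℂ)‖ = 4 := by simpa using Complex.norm_real 4
    rw [this]
  rw [h4] at hkey
  linarith
end
end
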